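/- Let T_π be the adaptive adversarial Bellman operator for policy π with fixed point Q^π, and suppose π_new satisfies min_ā E_{a∼π_new}[Q^{π_old}(s,a,ā)] = max_{π∈Π} min_ā E_{a∼π}[Q^{π_old}(s,a,ā)] for every s. Then T_{π_new} Q^{π_old} ≥ T_{π_old} Q^{π_old} = Q^{π_old} pointwise, and therefore by monotonicity and contraction of T_{π_new}, Q^{π_new} = lim_n T_{π_new}ⁿ Q^{π_old} ≥ Q^{π_old} pointwise. -/

import Mathlib

section A2PHelpers
variable {A : Type*} [Fintype A] [Nonempty A]

omit [Nonempty A] in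
private lemma a2p_wsum_mono (w f g : A → ℝ) (hw0 : ∀ i, 0 ≤ w i)
    (h : ∀ i, f i ≤ g i) : ∑ i, w i * f i ≤ ∑ i, w i * g i :=
  Finset.sum_le_sum fun i _ => mul_le_mul_of_nonneg_left (h i) (hw0 i)

omit [Nonempty A] in
private lemma a2p_wsum_abs_le (w f g : A → ℝ) (hw0 : ∀ i, 0 ≤ w i)
    (hw1 : ∑ i, w i = 1) {c : ℝ} (h : ∀ i, |f i - g i| ≤ c) :
    |∑ i, w i * f i - ∑ i, w i * g i| ≤ c := by
  rw [← Finset.sum_sub_distrib]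
  calc |∑ i, (w i * f i - w i * g i)| ≤ ∑ i, |w i * f i - w i * g i| :=
        Finset.abs_sum_le_sum_abs _ _
    _ = ∑ i, w i * |f i - g i| := by
        refine Finset.sum_congr rfl fun i _ => ?_
        rw [← mul_sub, abs_mul, abs_of_nonneg (hw0 i)]
    _ ≤ ∑ i, w i * c := Finset.sum_le_sum fun i _ => mul_le_mul_of_nonneg_left (h i) (hw0 i)
    _ = c := by rw [← Finset.sum_mul, hw1, one_mul]

private lemma a2p_fin_ciInf_exists (f : A → ℝ) : ∃ b0, (⨅ b, f b) = f b0 := by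
  obtain ⟨b0, hb0⟩ := Finite.exists_min f
  exact ⟨b0, le_antisymm (ciInf_le (Set.Finite.bddBelow (Set.finite_range f)) b0)
    (le_ciInf hb0)⟩

private lemma a2p_fin_ciInf_mono {f g : A → ℝ} (h : ∀ b, f b ≤ g b) :
    (⨅ b, f b) ≤ ⨅ b, g b :=
  ciInf_mono (Set.Finite.bddBelow (Set.finite_range f)) h

private lemma a2p_fin_ciInf_abs_diff_le {f g : A → ℝ} {c : ℝ} (h : ∀ b, |f b - g b| ≤ c) :
    |(⨅ b, f b) - (⨅ b, g b)| ≤ c := by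
  obtain ⟨bf, hf⟩ := a2p_fin_ciInf_exists f
  obtain ⟨bg, hg⟩ := a2p_fin_ciInf_exists g
  rw [abs_le]
  constructor
  · have h1 : (⨅ b, g b) ≤ g bf := ciInf_le (Set.Finite.bddBelow (Set.finite_range g)) bf
    have := (abs_le.mp (h bf)).1
    linarith [hf ▸ ciInf_le (Set.Finite.bddBelow (Set.finite_range f)) bf]
  · have h1 : (⨅ b, f b) ≤ f bg := ciInf_le (Set.Finite.bddBelow (Set.finite_range f)) bg
    have := (abs_le.mp (h bg)).2
    linarith [hg ▸ ciInf_le (Set.Finite.bddBelow (Set.finite_range g)) bg]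

end A2PHelpers

/-- **Theorem 2 (Policy Improvement) of the A2P paper.**
With `T π Q (s,a,b) = r_ε(s,a,b) + γ Σ_{s'} p_ε(s'|s,a,b)·(⨅ b', Σ_{a'} π(a'|s') Q(s',a',b'))`
for finite state/action sets, if `π_new` is greedy for `Q^{π_old}`, i.e.
`⨅ b, E_{a∼π_new}[Q^{π_old}(s,a,b)] = max_{π∈Π} ⨅ b, E_{a∼π}[Q^{π_old}(s,a,b)]` for all `s`,
then `T π_new Q^{π_old} ≥ T π_old Q^{π_old} = Q^{π_old}` pointwise, and
`Q^{π_new} = lim_n (T π_new)ⁿ Q^{π_old} ≥ Q^{π_old}` pointwise. -/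
theorem a2p_policy_improvement
    {S A : Type*} [Fintype S] [Fintype A] [Nonempty S] [Nonempty A]
    (r : S → A → A → ℝ) (p : S → A → A → S → ℝ)
    (hp0 : ∀ s a b s', 0 ≤ p s a b s') (hp1 : ∀ s a b, ∑ s', p s a b s' = 1)
    (γ : ℝ) (hγ0 : 0 ≤ γ) (hγ1 : γ < 1)
    (T : (S → A → ℝ) → (S → A → A → ℝ) → (S → A → A → ℝ))
    (hT : ∀ (π : S → A → ℝ) (Q : S → A → A → ℝ) (s : S) (a b : A),
      T π Q s a b = r s a b +
        γ * ∑ s', p s a b s' * ⨅ b', ∑ a', π s' a' * Q s' a' b')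
    (πold πnew : S → A → ℝ)
    (hπold : ∀ s, (∀ a, 0 ≤ πold s a) ∧ ∑ a, πold s a = 1)
    (hπnew : ∀ s, (∀ a, 0 ≤ πnew s a) ∧ ∑ a, πnew s a = 1)
    (Qold Qnew : S → A → A → ℝ)
    (hfixold : T πold Qold = Qold) (hfixnew : T πnew Qnew = Qnew)
    (hgreedy : ∀ s, (⨅ b, ∑ a, πnew s a * Qold s a b) =
      ⨆ π : {π : S → A → ℝ // ∀ s, (∀ a, 0 ≤ π s a) ∧ ∑ a, π s a = 1},
        ⨅ b, ∑ a, (π : S → A → ℝ) s a * Qold s a b) :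
    (∀ s a b, Qold s a b ≤ T πnew Qold s a b) ∧
    (∀ s a b, Filter.Tendsto (fun n => (T πnew)^[n] Qold s a b)
      Filter.atTop (nhds (Qnew s a b))) ∧
    (∀ s a b, Qold s a b ≤ Qnew s a b) := by
  classical
  -- the range of policy values is bounded above
  have hbdd : ∀ s : S, BddAbove (Set.range
      fun π : {π : S → A → ℝ // ∀ s, (∀ a, 0 ≤ π s a) ∧ ∑ a, π s a = 1} =>
        ⨅ b, ∑ a, (π : S → A → ℝ) s a * Qold s a b) := by
    intro s
    obtain ⟨b0⟩ := (inferInstance : Nonempty A)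
    refine ⟨Finset.univ.sup' Finset.univ_nonempty (fun a => Qold s a b0), ?_⟩
    rintro x ⟨π, rfl⟩
    refine le_trans (ciInf_le (Set.Finite.bddBelow (Set.finite_range _)) b0) ?_
    calc ∑ a, (π : S → A → ℝ) s a * Qold s a b0
        ≤ ∑ a, (π : S → A → ℝ) s a *
            Finset.univ.sup' Finset.univ_nonempty (fun a => Qold s a b0) :=
          a2p_wsum_mono _ _ _ (fun a => ((π.2 s).1 a))
            (fun a => Finset.le_sup' (fun a => Qold s a b0) (Finset.mem_univ a))
      _ = _ := by rw [← Finset.sum_mul, (π.2 s).2, one_mul]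
  -- greedy policy improves the inner value
  have hVle : ∀ s, (⨅ b, ∑ a, πold s a * Qold s a b) ≤ ⨅ b, ∑ a, πnew s a * Qold s a b := by
    intro s
    rw [hgreedy s]
    exact le_ciSup (hbdd s) ⟨πold, hπold⟩
  -- Step 1: Qold ≤ T πnew Qold
  have step1 : ∀ s a b, Qold s a b ≤ T πnew Qold s a b := by
    intro s a b
    conv_lhs => rw [← hfixold]
    rw [hT, hT]
    refine add_le_add_right (mul_le_mul_of_nonneg_left ?_ hγ0) _
    exact Finset.sum_le_sum fun s' _ => mul_le_mul_of_nonneg_left (hVle s') (hp0 s a b s')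
  -- monotonicity of T πnew
  have hmono : ∀ (Q Q' : S → A → A → ℝ), (∀ s a b, Q s a b ≤ Q' s a b) →
      ∀ s a b, T πnew Q s a b ≤ T πnew Q' s a b := by
    intro Q Q' h s a b
    rw [hT, hT]
    refine add_le_add_right (mul_le_mul_of_nonneg_left ?_ hγ0) _
    refine Finset.sum_le_sum fun s' _ => mul_le_mul_of_nonneg_left ?_ (hp0 s a b s')
    refine a2p_fin_ciInf_mono fun b' => ?_
    exact a2p_wsum_mono _ _ _ (fun a' => (hπnew s').1 a') (fun a' => h s' a' b')
  -- Qold below every iterate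
  have hchain : ∀ n s a b, Qold s a b ≤ (T πnew)^[n] Qold s a b := by
    intro n
    induction n with
    | zero => simp
    | succ n ih =>
      intro s a b
      rw [Function.iterate_succ_apply']
      exact le_trans (step1 s a b) (hmono Qold _ ih s a b)
  -- sup norm of the difference
  obtain ⟨s0⟩ := (inferInstance : Nonempty S)
  obtain ⟨a0⟩ := (inferInstance : Nonempty A)
  set D : ℝ := Finset.univ.sup' Finset.univ_nonempty
    (fun x : S × A × A => |Qold x.1 x.2.1 x.2.2 - Qnew x.1 x.2.1 x.2.2|) with hDdef
  have hD : ∀ s a b, |Qold s a b - Qnew s a b| ≤ D := fun s a b =>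
    Finset.le_sup' (fun x : S × A × A => |Qold x.1 x.2.1 x.2.2 - Qnew x.1 x.2.1 x.2.2|) (Finset.mem_univ (s, a, b))
  -- contraction estimate
  have hcontr : ∀ n s a b, |(T πnew)^[n] Qold s a b - Qnew s a b| ≤ γ ^ n * D := by
    intro n
    induction n with
    | zero => simpa using hD
    | succ n ih =>
      intro s a b
      rw [Function.iterate_succ_apply']
      have hQeq : Qnew s a b = T πnew Qnew s a b := by rw [hfixnew]
      rw [hQeq, hT, hT]
      have key : ∀ s', |(⨅ b', ∑ a', πnew s' a' * (T πnew)^[n] Qold s' a' b') -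
          ⨅ b', ∑ a', πnew s' a' * Qnew s' a' b'| ≤ γ ^ n * D := by
        intro s'
        refine a2p_fin_ciInf_abs_diff_le fun b' => ?_
        exact a2p_wsum_abs_le _ _ _ (fun a' => (hπnew s').1 a') (hπnew s').2
          (fun a' => ih s' a' b')
      have houter : |(∑ s', p s a b s' * ⨅ b', ∑ a', πnew s' a' * (T πnew)^[n] Qold s' a' b') -
          ∑ s', p s a b s' * ⨅ b', ∑ a', πnew s' a' * Qnew s' a' b'| ≤ γ ^ n * D :=
        a2p_wsum_abs_le _ _ _ (fun s' => hp0 s a b s') (hp1 s a b) key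
      calc |(r s a b + γ * ∑ s', p s a b s' * ⨅ b', ∑ a', πnew s' a' * (T πnew)^[n] Qold s' a' b') -
            (r s a b + γ * ∑ s', p s a b s' * ⨅ b', ∑ a', πnew s' a' * Qnew s' a' b')|
          = γ * |(∑ s', p s a b s' * ⨅ b', ∑ a', πnew s' a' * (T πnew)^[n] Qold s' a' b') -
              ∑ s', p s a b s' * ⨅ b', ∑ a', πnew s' a' * Qnew s' a' b'| := by
            rw [show r s a b + γ * (∑ s', p s a b s' * ⨅ b', ∑ a', πnew s' a' * (T πnew)^[n] Qold s' a' b') -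
              (r s a b + γ * ∑ s', p s a b s' * ⨅ b', ∑ a', πnew s' a' * Qnew s' a' b') =
              γ * ((∑ s', p s a b s' * ⨅ b', ∑ a', πnew s' a' * (T πnew)^[n] Qold s' a' b') -
                ∑ s', p s a b s' * ⨅ b', ∑ a', πnew s' a' * Qnew s' a' b') from by ring,
              abs_mul, abs_of_nonneg hγ0]
        _ ≤ γ * (γ ^ n * D) := mul_le_mul_of_nonneg_left houter hγ0
        _ = γ ^ (n + 1) * D := by ring
  -- convergence
  have htend : ∀ s a b, Filter.Tendsto (fun n => (T πnew)^[n] Qold s a b)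
      Filter.atTop (nhds (Qnew s a b)) := by
    intro s a b
    have h0 : Filter.Tendsto (fun n => γ ^ n * D) Filter.atTop (nhds 0) := by
      simpa using (tendsto_pow_atTop_nhds_zero_of_lt_one hγ0 hγ1).mul_const D
    have hsq : Filter.Tendsto (fun n => (T πnew)^[n] Qold s a b - Qnew s a b)
        Filter.atTop (nhds 0) :=
      squeeze_zero_norm (fun n => by simpa [Real.norm_eq_abs] using hcontr n s a b) h0
    have := hsq.add_const (Qnew s a b)
    simpa using this
  refine ⟨step1, htend, fun s a b => ?_⟩
  exact ge_of_tendsto' (htend s a b) (fun n => hchain n s a b)
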